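/- Suppose P and Q are polynomials in ℝ[x₁,…,xₙ] such that H^{n−1}(Z(Q) ∖ Z(P)) = 0 and every non-constant divisor of Q changes sign on ℝ^n. Then Q divides P. -/

import Mathlib

open MvPolynomial MeasureTheory
open scoped nonZeroDivisors

private lemma mv_eval_aeval {n : ℕ} (f : Fin n → MvPolynomial (Fin n) ℝ)
    (p : MvPolynomial (Fin n) ℝ) (x : Fin n → ℝ) :
    eval x (MvPolynomial.aeval f p) = eval (fun i => eval x (f i)) p := by
  rw [MvPolynomial.aeval_def, MvPolynomial.eval₂_comp_left (eval x)]
  rw [show ((eval x).comp (algebraMap ℝ (MvPolynomial (Fin n) ℝ))) = RingHom.id ℝ from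
    RingHom.ext (fun r => by simp)]
  rw [MvPolynomial.eval₂_id]
  rfl

private lemma mv_zero_of_ball {m : ℕ} (c : MvPolynomial (Fin m) ℝ) (z : Fin m → ℝ) (ε : ℝ)
    (hε : 0 < ε) (h : ∀ x ∈ Metric.ball z ε, eval x c = 0) : c = 0 := by
  induction m with
  | zero =>
      have h0 := h z (Metric.mem_ball_self hε)
      rw [MvPolynomial.eq_C_of_isEmpty c] at h0 ⊢
      simp only [eval_C] at h0
      rw [h0, map_zero]
  | succ m ih =>
      have hF : finSuccEquiv ℝ m c = 0 := by
        apply Polynomial.ext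
        intro k
        simp only [Polynomial.coeff_zero]
        apply ih _ (Fin.tail z)
        intro y hy
        have hpoly : (Polynomial.map (eval y) (finSuccEquiv ℝ m c)) = 0 := by
          apply Polynomial.eq_zero_of_infinite_isRoot
          apply Set.Infinite.mono (s := Set.Ioo (z 0 - ε) (z 0 + ε))
          · intro t ht
            have hmem : (Fin.cons t y : Fin (m+1) → ℝ) ∈ Metric.ball z ε := by
              rw [Metric.mem_ball, dist_pi_lt_iff hε]
              intro i
              refine Fin.cases ?_ ?_ i
              · simp only [Fin.cons_zero]
                rw [Real.dist_eq, abs_lt]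
                constructor <;> [linarith [ht.1]; linarith [ht.2]]
              · intro j
                simpa [Fin.tail] using (dist_pi_lt_iff hε).1 (Metric.mem_ball.1 hy) j
            have := h _ hmem
            rw [eval_eq_eval_mv_eval'] at this
            exact this
          · exact Set.Ioo_infinite (by linarith)
        have := congrArg (fun p => Polynomial.coeff p k) hpoly
        simpa using this
      have := congrArg (finSuccEquiv ℝ m).symm hF
      simpa using this

private lemma tail_lipschitz {m : ℕ} :
    LipschitzWith 1 (fun x : Fin (m+1) → ℝ => Fin.tail x) := by
  apply LipschitzWith.of_dist_le_mul
  intro x y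
  rw [NNReal.coe_one, one_mul]
  refine (dist_pi_le_iff dist_nonneg).2 fun i => ?_
  exact dist_le_pi_dist x y i.succ

/-- Core lemma: an irreducible polynomial changing sign along a vertical line divides `P`
if `Z(q) \ Z(P)` is `H^m`-null. -/
private lemma key' {m : ℕ} (q P : MvPolynomial (Fin (m+1)) ℝ) (hq : Irreducible q)
    (hnull : μH[(m : ℝ)] ({x : Fin (m+1) → ℝ | eval x q = 0} \ {x | eval x P = 0}) = 0)
    (y₀ : Fin m → ℝ) (α β : ℝ)
    (ha : 0 < eval (Fin.cons α y₀) q) (hb : eval (Fin.cons β y₀) q < 0) : q ∣ P := by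
  classical
  set R' := MvPolynomial (Fin m) ℝ with hR'
  letI : NormalizationMonoid R' := UniqueFactorizationMonoid.normalizationMonoid.toNormalizationMonoid
  letI : NormalizedGCDMonoid R' := UniqueFactorizationMonoid.toNormalizedGCDMonoid R'
  set K := FractionRing R' with hK
  set σe := MvPolynomial.finSuccEquiv ℝ m with hσe
  set A : Polynomial R' := σe q with hA
  set B : Polynomial R' := σe P with hB
  set ι : R' →+* K := algebraMap R' K with hι
  have hιinj : Function.Injective ι := IsFractionRing.injective R' K
  -- evaluation along vertical lines
  have evalline : ∀ (t : ℝ) (x' : Fin m → ℝ) (f : MvPolynomial (Fin (m+1)) ℝ),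
      eval (Fin.cons t x') f = (Polynomial.map (eval x') (σe f)).eval t := by
    intro t x' f
    rw [eval_eq_eval_mv_eval']
  -- A is irreducible, nonconstant, primitive
  have hAirr : Irreducible A := (MulEquiv.irreducible_iff σe).2 hq
  have hdeg : A.natDegree ≠ 0 := by
    intro h0
    have hC := Polynomial.eq_C_of_natDegree_eq_zero h0
    have h1 := evalline α y₀ q
    have h2 := evalline β y₀ q
    rw [← hA, hC] at h1 h2
    simp only [Polynomial.map_C, Polynomial.eval_C] at h1 h2
    rw [h1] at ha; rw [h2] at hb
    exact absurd ha (not_lt.2 hb.le)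
  have hprim : A.IsPrimitive := by
    intro r hr
    obtain ⟨s, hs⟩ := hr
    rcases hAirr.isUnit_or_isUnit hs with h | h
    · exact Polynomial.isUnit_C.1 h
    · exfalso
      obtain ⟨u, hu, hus⟩ := Polynomial.isUnit_iff.1 h
      apply hdeg
      rw [hs, ← hus, ← Polynomial.C_mul]
      exact Polynomial.natDegree_C _
  -- reduce to showing A.map ι ∣ B.map ι
  suffices hsuff : A ∣ B by
    obtain ⟨c, hc⟩ := hsuff
    refine ⟨σe.symm c, ?_⟩
    apply σe.injective
    rw [map_mul]
    simp only [AlgEquiv.apply_symm_apply]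
    exact hc
  rcases eq_or_ne P 0 with rfl | hP0
  · simp only [map_zero, hB]
    exact Dvd.intro 0 (by ring)
  have hB0 : B ≠ 0 := fun h => hP0 (by
    have := congrArg σe.symm h
    simpa [hB] using this)

  suffices hKdvd : A.map ι ∣ B.map ι by
    have hcont : ι B.content ≠ 0 := by
      intro h
      apply hB0
      apply Polynomial.content_eq_zero_iff.1
      apply hιinj
      rw [map_zero]
      exact h
    have hdecomp : B.map ι = Polynomial.C (ι B.content) * (B.primPart.map ι) := by
      conv_lhs => rw [B.eq_C_content_mul_primPart]
      rw [Polynomial.map_mul, Polynomial.map_C]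
    have hdvd2 : A.map ι ∣ B.primPart.map ι := by
      have : B.primPart.map ι = Polynomial.C (ι B.content)⁻¹ * B.map ι := by
        rw [hdecomp, ← mul_assoc, ← Polynomial.C_mul, inv_mul_cancel₀ hcont, Polynomial.C_1,
          one_mul]
      rw [this]
      exact Dvd.dvd.mul_left hKdvd _
    exact (hprim.dvd_of_fraction_map_dvd_fraction_map
      hdvd2).trans B.primPart_dvd
  -- suppose not; derive a Bezout identity with nonzero "resultant" r₀
  by_contra hnd
  have hAK : Irreducible (A.map ι) := hprim.irreducible_iff_irreducible_map_fraction_map.1 hAirr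
  obtain ⟨u, v, huv⟩ := (hAK.coprime_iff_not_dvd).2 hnd
  obtain ⟨b₁, h₁⟩ := IsLocalization.integerNormalization_map_to_map R'⁰ u
  obtain ⟨b₂, h₂⟩ := IsLocalization.integerNormalization_map_to_map R'⁰ v
  set W₁ : Polynomial R' := (b₂ : R') • IsLocalization.integerNormalization R'⁰ u with hW₁
  set W₂ : Polynomial R' := (b₁ : R') • IsLocalization.integerNormalization R'⁰ v with hW₂
  set r₀ : R' := (b₁ : R') * (b₂ : R') with hr₀
  have hr0 : r₀ ≠ 0 := mul_ne_zero (nonZeroDivisors.ne_zero b₁.2) (nonZeroDivisors.ne_zero b₂.2)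
  have hmapsmul : ∀ (b : R') (p : Polynomial R'),
      (b • p).map ι = Polynomial.C (ι b) * p.map ι := by
    intro b p
    rw [Polynomial.smul_eq_C_mul, Polynomial.map_mul, Polynomial.map_C]
  have hsm : ∀ (b : R') (p : Polynomial K), (b : R') • p = Polynomial.C (ι b) * p := by
    intro b p
    rw [← algebraMap_smul K b p, Polynomial.smul_eq_C_mul]
  have E : W₁ * A + W₂ * B = Polynomial.C r₀ := by
    apply Polynomial.map_injective ι hιinj
    rw [Polynomial.map_add, Polynomial.map_mul, Polynomial.map_mul, hW₁, hW₂,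
      hmapsmul, hmapsmul, h₁, h₂, hsm, hsm, Polynomial.map_C, hr₀, map_mul, Polynomial.C_mul]
    linear_combination (Polynomial.C (ι b₁) * Polynomial.C (ι b₂)) * huv
  -- measure-theoretic part
  have contα : Continuous fun x' : Fin m → ℝ => eval (Fin.cons α x') q := by
    apply (MvPolynomial.continuous_eval q).comp
    exact continuous_pi fun i => Fin.cases continuous_const (fun j => continuous_apply j) i
  have contβ : Continuous fun x' : Fin m → ℝ => eval (Fin.cons β x') q := by
    apply (MvPolynomial.continuous_eval q).comp
    exact continuous_pi fun i => Fin.cases continuous_const (fun j => continuous_apply j) i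
  have hUopen : IsOpen {x' : Fin m → ℝ | 0 < eval (Fin.cons α x') q ∧
      eval (Fin.cons β x') q < 0} :=
    (isOpen_lt continuous_const contα).inter (isOpen_lt contβ continuous_const)
  have hy₀mem : y₀ ∈ {x' : Fin m → ℝ | 0 < eval (Fin.cons α x') q ∧
      eval (Fin.cons β x') q < 0} := ⟨ha, hb⟩
  obtain ⟨ε, hε, hball⟩ := Metric.isOpen_iff.1 hUopen y₀ hy₀mem
  set N := {x : Fin (m+1) → ℝ | eval x q = 0} \ {x | eval x P = 0} with hN
  set tailN := (fun x : Fin (m+1) → ℝ => Fin.tail x) '' N with htailN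
  have hcast : (μH[(m:ℝ)] : Measure (Fin m → ℝ)) = volume := by
    have := MeasureTheory.hausdorffMeasure_pi_real (ι := Fin m)
    rwa [Fintype.card_fin] at this
  have htailnull : volume tailN = 0 := by
    rw [← hcast]
    have h2 := tail_lipschitz.hausdorffMeasure_image_le
      (show (0:ℝ) ≤ (m:ℝ) by positivity) N
    rw [hnull, mul_zero] at h2
    exact nonpos_iff_eq_zero.1 h2
  -- on almost every vertical line in the ball, q and P have a common zero
  have hgood : ∀ x' ∈ Metric.ball y₀ ε, x' ∉ tailN → eval x' r₀ = 0 := by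
    intro x' hx' hnot
    obtain ⟨hpos, hneg⟩ := hball hx'
    have contt : Continuous fun t : ℝ => eval (Fin.cons t x') q := by
      have : (fun t : ℝ => eval (Fin.cons t x') q)
          = fun t => (Polynomial.map (eval x') (σe q)).eval t := by
        funext t; exact evalline t x' q
      rw [this]
      exact Polynomial.continuous _
    have h0mem : (0:ℝ) ∈ Set.uIcc (eval (Fin.cons α x') q) (eval (Fin.cons β x') q) :=
      Set.mem_uIcc.2 (Or.inr ⟨hneg.le, hpos.le⟩)
    obtain ⟨t, _, ht⟩ := intermediate_value_uIcc (f := fun t : ℝ => eval (Fin.cons t x') q)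
      (a := α) (b := β) (contt.continuousOn) h0mem
    have hPt : eval (Fin.cons t x') P = 0 := by
      by_contra hne
      exact hnot ⟨Fin.cons t x', ⟨ht, hne⟩, Fin.tail_cons _ _⟩
    have hA0 : (Polynomial.map (eval x') A).eval t = 0 := by rw [← evalline]; exact ht
    have hB0' : (Polynomial.map (eval x') B).eval t = 0 := by rw [← evalline]; exact hPt
    have := congrArg (fun p : Polynomial R' =>
      (Polynomial.map (MvPolynomial.eval x') p).eval t) E
    simp only [Polynomial.map_add, Polynomial.map_mul, Polynomial.eval_add, Polynomial.eval_mul,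
      hA0, hB0', mul_zero, add_zero, Polynomial.map_C, Polynomial.eval_C] at this
    exact this.symm
  -- hence r₀ vanishes on the whole ball, so r₀ = 0, contradiction
  apply hr0
  apply mv_zero_of_ball r₀ y₀ ε hε
  intro x' hx'
  by_contra hne
  have hWopen : IsOpen {z : Fin m → ℝ | z ∈ Metric.ball y₀ ε ∧ eval z r₀ ≠ 0} :=
    Metric.isOpen_ball.inter (isOpen_ne_fun (MvPolynomial.continuous_eval r₀) continuous_const)
  have hWsub : {z : Fin m → ℝ | z ∈ Metric.ball y₀ ε ∧ eval z r₀ ≠ 0} ⊆ tailN := by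
    intro z hz
    by_contra hznot
    exact hz.2 (hgood z hz.1 hznot)
  have : volume {z : Fin m → ℝ | z ∈ Metric.ball y₀ ε ∧ eval z r₀ ≠ 0} = 0 :=
    measure_mono_null hWsub htailnull
  have hpos := hWopen.measure_pos (volume : Measure (Fin m → ℝ)) ⟨x', hx', hne⟩
  rw [this] at hpos
  exact lt_irrefl _ hpos

private lemma key {m : ℕ} (P Q q : MvPolynomial (Fin (m+1)) ℝ) (hq : Irreducible q)
    (hqQ : q ∣ Q)
    (hH : μH[(m : ℝ)] ({x : Fin (m+1) → ℝ | eval x Q = 0} \ {x | eval x P = 0}) = 0)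
    {a b : Fin (m+1) → ℝ} (ha : 0 < eval a q) (hb : eval b q < 0) : q ∣ P := by
  classical
  set v : Fin (m+1) → ℝ := b - a with hv
  have hab : a ≠ b := by
    intro h; rw [h] at ha; exact absurd ha (not_lt.2 hb.le)
  have hvne : v ≠ 0 := by
    intro h
    apply hab
    funext j
    have := congrFun h j
    simp only [hv, Pi.sub_apply, Pi.zero_apply, sub_eq_zero] at this
    exact this.symm
  obtain ⟨i₀, hi₀⟩ := Function.ne_iff.1 hvne
  simp only [Pi.zero_apply] at hi₀
  set τ : Equiv.Perm (Fin (m+1)) := Equiv.swap 0 i₀ with hτ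
  set v' : Fin (m+1) → ℝ := fun i => v (τ i) with hv'
  have hv0 : v' 0 ≠ 0 := by
    simp only [hv', hτ, Equiv.swap_apply_left]
    exact hi₀
  have hττ : ∀ j, τ (τ j) = j := fun j => Equiv.swap_apply_self _ _ j
  -- substitution polynomials
  set f : Fin (m+1) → MvPolynomial (Fin (m+1)) ℝ :=
    fun i => if i = 0 then C (v' 0) * X 0 else X i + C (v' i) * X 0 with hf
  set g : Fin (m+1) → MvPolynomial (Fin (m+1)) ℝ :=
    fun i => if i = 0 then C (v' 0)⁻¹ * X 0 else X i - C (v' i * (v' 0)⁻¹) * X 0 with hg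
  have hC1 : (C (v' 0) : MvPolynomial (Fin (m+1)) ℝ) * C (v' 0)⁻¹ = 1 := by
    rw [← C_mul, mul_inv_cancel₀ hv0, C_1]
  have hC2 : (C (v' 0)⁻¹ : MvPolynomial (Fin (m+1)) ℝ) * C (v' 0) = 1 := by
    rw [← C_mul, inv_mul_cancel₀ hv0, C_1]
  have haux1 : ∀ i, MvPolynomial.aeval g (f i) = (X i : MvPolynomial (Fin (m+1)) ℝ) := by
    intro i
    by_cases h : i = 0
    · subst h
      simp only [hf, hg, reduceIte, if_true, map_mul, aeval_C, aeval_X, algebraMap_eq]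
      linear_combination (X 0 : MvPolynomial (Fin (m+1)) ℝ) * hC1
    · simp only [hf, hg, if_neg h, map_add, map_sub, map_mul, aeval_C, aeval_X, reduceIte,
        if_true, algebraMap_eq]
      ring
  have haux2 : ∀ i, MvPolynomial.aeval f (g i) = (X i : MvPolynomial (Fin (m+1)) ℝ) := by
    intro i
    by_cases h : i = 0
    · subst h
      simp only [hf, hg, reduceIte, if_true, map_mul, aeval_C, aeval_X, algebraMap_eq]
      linear_combination (X 0 : MvPolynomial (Fin (m+1)) ℝ) * hC2
    · simp only [hf, hg, if_neg h, map_add, map_sub, map_mul, aeval_C, aeval_X, reduceIte,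
        if_true, algebraMap_eq]
      linear_combination (-(C (v' i) * X 0) : MvPolynomial (Fin (m+1)) ℝ) * hC2
  have hgf : ∀ p : MvPolynomial (Fin (m+1)) ℝ, MvPolynomial.aeval g (MvPolynomial.aeval f p) = p := by
    intro p
    have hcomp : (MvPolynomial.aeval g).comp (MvPolynomial.aeval f)
        = AlgHom.id ℝ (MvPolynomial (Fin (m+1)) ℝ) := by
      apply MvPolynomial.algHom_ext
      intro i
      simp only [AlgHom.comp_apply, aeval_X, AlgHom.id_apply]
      exact haux1 i
    have := DFunLike.congr_fun hcomp p
    simpa using this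
  have hfg : ∀ p : MvPolynomial (Fin (m+1)) ℝ, MvPolynomial.aeval f (MvPolynomial.aeval g p) = p := by
    intro p
    have hcomp : (MvPolynomial.aeval f).comp (MvPolynomial.aeval g)
        = AlgHom.id ℝ (MvPolynomial (Fin (m+1)) ℝ) := by
      apply MvPolynomial.algHom_ext
      intro i
      simp only [AlgHom.comp_apply, aeval_X, AlgHom.id_apply]
      exact haux2 i
    have := DFunLike.congr_fun hcomp p
    simpa using this
  have hren : ∀ p : MvPolynomial (Fin (m+1)) ℝ, rename τ (rename τ p) = p := by
    intro p
    rw [MvPolynomial.rename_rename]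
    rw [show (⇑τ ∘ ⇑τ) = id from funext hττ]
    exact MvPolynomial.rename_id_apply p
  -- the polynomial substitution and the space transformation
  set Ψ : MvPolynomial (Fin (m+1)) ℝ → MvPolynomial (Fin (m+1)) ℝ :=
    fun p => MvPolynomial.aeval f (rename τ p) with hΨ
  set Ψ' : MvPolynomial (Fin (m+1)) ℝ → MvPolynomial (Fin (m+1)) ℝ :=
    fun p => rename τ (MvPolynomial.aeval g p) with hΨ'
  have hΨΨ' : ∀ p, Ψ' (Ψ p) = p := by
    intro p
    simp only [hΨ, hΨ']
    rw [hgf (rename τ p), hren]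
  set S : (Fin (m+1) → ℝ) → (Fin (m+1) → ℝ) :=
    fun x i => if i = 0 then v' 0 * x 0 else x i + v' i * x 0 with hS
  set T : (Fin (m+1) → ℝ) → (Fin (m+1) → ℝ) := fun x => (S x) ∘ τ with hT
  set Sinv : (Fin (m+1) → ℝ) → (Fin (m+1) → ℝ) :=
    fun y i => if i = 0 then (v' 0)⁻¹ * y 0 else y i - v' i * ((v' 0)⁻¹ * y 0) with hSinv
  set T' : (Fin (m+1) → ℝ) → (Fin (m+1) → ℝ) := fun y => Sinv (y ∘ τ) with hT'
  have hevalΨ : ∀ (x : Fin (m+1) → ℝ) (p : MvPolynomial (Fin (m+1)) ℝ),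
      eval x (Ψ p) = eval (T x) p := by
    intro x p
    simp only [hΨ]
    rw [mv_eval_aeval, MvPolynomial.eval_rename]
    have hfun : ((fun i => eval x (f i)) ∘ ⇑τ) = T x := by
      funext j
      simp only [Function.comp_apply, hT, hS, hf]
      by_cases h : τ j = 0 <;> simp [h]
    rw [hfun]
  have hSS : ∀ y, S (Sinv y) = y := by
    intro y
    funext i
    by_cases h : i = 0
    · subst h; simp only [hS, hSinv, if_pos rfl, if_true]
      field_simp
    · simp only [hS, hSinv, if_neg h, if_pos rfl, if_true]
      field_simp
      ring
  have hS'S : ∀ x, Sinv (S x) = x := by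
    intro x
    funext i
    by_cases h : i = 0
    · subst h; simp only [hS, hSinv, if_pos rfl, if_true]
      field_simp
    · simp only [hS, hSinv, if_neg h, if_pos rfl, if_true]
      field_simp
      ring
  have hTT' : ∀ y, T (T' y) = y := by
    intro y
    simp only [hT, hT']
    rw [hSS]
    funext j
    simp [hττ]
  have hT'T : ∀ x, T' (T x) = x := by
    intro x
    simp only [hT, hT']
    have : (S x ∘ ⇑τ) ∘ ⇑τ = S x := by
      funext j; simp [hττ]
    rw [this, hS'S]
  -- sign data in the new coordinates
  set e0 : Fin (m+1) → ℝ := fun j => if j = 0 then 1 else 0 with he0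
  have hTe0 : T e0 = v := by
    funext j
    by_cases h : τ j = 0
    · have hj : j = τ 0 := by rw [← hττ j, h]
      simp [hT, hS, he0, h, hj, hv', hττ]
    · simp [hT, hS, he0, h, hv', hττ]
  have hTadd : ∀ x y, T (x + y) = T x + T y := by
    intro x y
    funext j
    simp only [hT, hS, Function.comp_apply, Pi.add_apply]
    by_cases h : τ j = 0 <;> simp [hS, h] <;> ring
  set a' : Fin (m+1) → ℝ := T' a with ha'
  set b' : Fin (m+1) → ℝ := a' + e0 with hb'
  have hTa' : T a' = a := hTT' a
  have hTb' : T b' = b := by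
    rw [hb', hTadd, hTa', hTe0, hv]
    funext j; simp
  have hsign1 : 0 < eval a' (Ψ q) := by rw [hevalΨ, hTa']; exact ha
  have hsign2 : eval b' (Ψ q) < 0 := by rw [hevalΨ, hTb']; exact hb
  -- Ψ q is irreducible via the algebra equivalence
  have hΨq_irr : Irreducible (Ψ q) := by
    have h1 : ((MvPolynomial.aeval f).comp (rename (R := ℝ) ⇑τ)).comp
        ((rename ⇑τ).comp (MvPolynomial.aeval g)) = AlgHom.id ℝ (MvPolynomial (Fin (m+1)) ℝ) := by
      apply MvPolynomial.algHom_ext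
      intro i
      simp only [AlgHom.comp_apply, AlgHom.id_apply, aeval_X]
      rw [hren (g i), haux2 i]
    have h2 : ((rename (R := ℝ) ⇑τ).comp (MvPolynomial.aeval g)).comp
        ((MvPolynomial.aeval f).comp (rename ⇑τ)) = AlgHom.id ℝ (MvPolynomial (Fin (m+1)) ℝ) := by
      apply MvPolynomial.algHom_ext
      intro i
      simp only [AlgHom.comp_apply, AlgHom.id_apply, rename_X, aeval_X]
      rw [haux1 (τ i), rename_X, hττ]
    have hΦq : (AlgEquiv.ofAlgHom ((MvPolynomial.aeval f).comp (rename ⇑τ))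
        ((rename ⇑τ).comp (MvPolynomial.aeval g)) h1 h2) q = Ψ q := rfl
    rw [← hΦq]
    exact (MulEquiv.irreducible_iff ((AlgEquiv.ofAlgHom ((MvPolynomial.aeval f).comp (rename ⇑τ))
        ((rename ⇑τ).comp (MvPolynomial.aeval g)) h1 h2) : MvPolynomial (Fin (m+1)) ℝ ≃*
        MvPolynomial (Fin (m+1)) ℝ)).2 hq
  -- T' is Lipschitz
  have hT'add : ∀ x y, T' (x + y) = T' x + T' y := by
    intro x y
    funext j
    by_cases h : j = 0 <;> simp [hT', hSinv, h] <;> ring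
  have hT'smul : ∀ (c : ℝ) (x), T' (c • x) = c • T' x := by
    intro c x
    funext j
    by_cases h : j = 0 <;> simp [hT', hSinv, h] <;> ring
  set T'lin : (Fin (m+1) → ℝ) →ₗ[ℝ] (Fin (m+1) → ℝ) :=
    { toFun := T', map_add' := hT'add, map_smul' := hT'smul } with hT'lin
  have hT'lip : LipschitzWith ‖LinearMap.toContinuousLinearMap T'lin‖₊ T' := by
    have := (LinearMap.toContinuousLinearMap T'lin).lipschitz
    simpa [hT'lin] using this
  -- transport the null hypothesis
  have hnull' : μH[(m:ℝ)] ({x : Fin (m+1) → ℝ | eval x (Ψ q) = 0} \ {x | eval x (Ψ P) = 0})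
      = 0 := by
    have hsub : ({x : Fin (m+1) → ℝ | eval x (Ψ q) = 0} \ {x | eval x (Ψ P) = 0})
        ⊆ T' '' ({x : Fin (m+1) → ℝ | eval x Q = 0} \ {x | eval x P = 0}) := by
      intro x hx
      refine ⟨T x, ⟨?_, ?_⟩, hT'T x⟩
      · obtain ⟨c, hc⟩ := hqQ
        have h1 : eval (T x) q = 0 := by rw [← hevalΨ]; exact hx.1
        rw [hc]
        simp only [Set.mem_setOf_eq, map_mul, h1, zero_mul]
      · have h2 : eval (T x) P ≠ 0 := by rw [← hevalΨ]; exact hx.2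
        exact h2
    refine le_antisymm (le_trans (measure_mono hsub) ?_) (by positivity)
    have himg := hT'lip.hausdorffMeasure_image_le (show (0:ℝ) ≤ (m:ℝ) by positivity)
      ({x : Fin (m+1) → ℝ | eval x Q = 0} \ {x | eval x P = 0})
    rw [hH, mul_zero] at himg
    exact himg
  -- apply the core lemma in the new coordinates
  have hconsa : (Fin.cons (a' 0) (Fin.tail a') : Fin (m+1) → ℝ) = a' := Fin.cons_self_tail a'
  have hconsb : (Fin.cons (a' 0 + 1) (Fin.tail a') : Fin (m+1) → ℝ) = b' := by
    funext j
    refine Fin.cases ?_ ?_ j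
    · simp [hb', he0]
    · intro k
      simp [hb', he0, Fin.tail, Fin.succ_ne_zero]
  have hdvd := key' (Ψ q) (Ψ P) hΨq_irr hnull' (Fin.tail a') (a' 0) (a' 0 + 1)
    (by rw [hconsa]; exact hsign1) (by rw [hconsb]; exact hsign2)
  -- transport the divisibility back
  obtain ⟨c, hc⟩ := hdvd
  have hΨ'mul : ∀ x y : MvPolynomial (Fin (m+1)) ℝ, Ψ' (x * y) = Ψ' x * Ψ' y := by
    intro x y
    simp only [hΨ', map_mul]
  refine ⟨Ψ' c, ?_⟩
  have hPc := congrArg Ψ' hc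
  rw [hΨΨ' P, hΨ'mul, hΨΨ' q] at hPc
  exact hPc

private lemma mv_td0 {k : ℕ} (p : MvPolynomial (Fin k) ℝ) (h : p.totalDegree = 0) :
    p = C (coeff 0 p) := by
  apply MvPolynomial.ext
  intro m
  rw [MvPolynomial.coeff_C]
  by_cases hm : 0 = m
  · rw [if_pos hm, ← hm]
  · rw [if_neg hm]
    by_contra hc
    have hmem : m ∈ p.support := MvPolynomial.mem_support_iff.2 hc
    have hz := (MvPolynomial.totalDegree_eq_zero_iff (Fin k) p).1 h m hmem
    apply hm
    ext x
    simp [hz x]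

private lemma sqf_dvd {α : Type*} [CommMonoidWithZero α] [IsCancelMulZero α] [UniqueFactorizationMonoid α]
    (Q : α) : ∀ P : α, Squarefree Q → (∀ p, Prime p → p ∣ Q → p ∣ P) → Q ∣ P := by
  refine UniqueFactorizationMonoid.induction_on_prime Q ?_ ?_ ?_
  · intro P hsq _
    exact (hsq 0 (by simp)).dvd
  · intro x hx P _ _
    exact hx.dvd
  · intro a p ha hp IH P hsq hdiv
    obtain ⟨P', hP'⟩ := hdiv p hp (dvd_mul_right p a)
    have haP' : a ∣ P' := by
      refine IH P' (hsq.squarefree_of_dvd (dvd_mul_left a p)) ?_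
      intro r hr hra
      have hrP : r ∣ p * P' := by
        rw [← hP']
        exact hdiv r hr (Dvd.dvd.mul_left hra p)
      rcases hr.dvd_or_dvd hrP with hrp | hgood
      · exfalso
        obtain ⟨u, hu⟩ := hrp
        rcases hp.irreducible.isUnit_or_isUnit hu with hur | huu
        · exact hr.not_unit hur
        · -- p ∣ r, hence p ∣ a, contradicting squarefreeness
          obtain ⟨w, hw⟩ := huu
          have hpr : p ∣ r := by
            refine ⟨(↑w⁻¹ : α), ?_⟩
            rw [hu, ← hw, mul_assoc]
            simp
          have hpa : p ∣ a := hpr.trans hra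
          obtain ⟨s, hs⟩ := hpa
          have : p * p ∣ p * a := ⟨s, by rw [hs, ← mul_assoc]⟩
          exact hp.not_unit (hsq p this)
      · exact hgood
    obtain ⟨c, hc⟩ := haP'
    exact ⟨c, by rw [hP', hc, mul_assoc]⟩

/-- If `P, Q` are real polynomials such that `H^{n-1}(Z(Q) ∖ Z(P)) = 0` and every
non-constant divisor of `Q` changes sign on `ℝⁿ`, then `Q` divides `P`. -/
theorem stmt18 {n : ℕ} (P Q : MvPolynomial (Fin n) ℝ)
    (hH : μH[(n : ℝ) - 1] ({x : Fin n → ℝ | eval x Q = 0} \ {x | eval x P = 0}) = 0)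
    (hsign : ∀ Q₁ Q₂ : MvPolynomial (Fin n) ℝ, Q = Q₁ * Q₂ → Q₁.totalDegree ≠ 0 →
      (∃ x : Fin n → ℝ, 0 < eval x Q₁) ∧ (∃ y : Fin n → ℝ, eval y Q₁ < 0)) :
    ∃ R : MvPolynomial (Fin n) ℝ, P = Q * R := by
  cases n with
  | zero =>
      have hempty : ({x : Fin 0 → ℝ | eval x Q = 0} \ {x | eval x P = 0}) = ∅ := by
        by_contra hne
        obtain ⟨x, hx⟩ := Set.nonempty_iff_ne_empty.2 hne
        rcases MeasureTheory.Measure.hausdorffMeasure_zero_or_top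
            (show ((0:ℕ):ℝ) - 1 < 0 by norm_num)
            ({x : Fin 0 → ℝ | eval x Q = 0} \ {x | eval x P = 0}) with h | h
        · have h1 := MeasureTheory.Measure.one_le_hausdorffMeasure_zero_of_nonempty
            (s := ({x : Fin 0 → ℝ | eval x Q = 0} \ {x | eval x P = 0})) ⟨x, hx⟩
          rw [h] at h1
          simp at h1
        · rw [hH] at h
          exact ENNReal.zero_ne_top h
      rcases eq_or_ne Q 0 with rfl | hQ0
      · -- Q = 0 : then P vanishes at the unique point, hence P = 0
        refine ⟨0, ?_⟩
        rw [zero_mul]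
        set x₀ : Fin 0 → ℝ := fun i => i.elim0 with hx₀
        have hx₀Q : eval x₀ (0 : MvPolynomial (Fin 0) ℝ) = 0 := by simp
        have hx₀P : eval x₀ P = 0 := by
          by_contra hne
          have : x₀ ∈ ({x : Fin 0 → ℝ | eval x (0 : MvPolynomial (Fin 0) ℝ) = 0}
              \ {x | eval x P = 0}) := ⟨hx₀Q, hne⟩
          rw [hempty] at this
          exact this
        rw [MvPolynomial.eq_C_of_isEmpty P] at hx₀P ⊢
        rw [eval_C] at hx₀P
        rw [hx₀P, map_zero]
      · set c := Q.coeff 0 with hcdef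
        have hQC : Q = C c := MvPolynomial.eq_C_of_isEmpty Q
        have hc0 : c ≠ 0 := by
          intro h
          apply hQ0
          rw [hQC, h, map_zero]
        refine ⟨C c⁻¹ * P, ?_⟩
        rw [hQC, ← mul_assoc, ← C_mul, mul_inv_cancel₀ hc0, C_1, one_mul]
  | succ m =>
      rcases eq_or_ne Q 0 with rfl | hQ0
      · exfalso
        have htd : (X 0 ^ 2 + 1 : MvPolynomial (Fin (m+1)) ℝ).totalDegree ≠ 0 := by
          intro h0
          have h1 : coeff (Finsupp.single 0 2) (X 0 ^ 2 + 1 : MvPolynomial (Fin (m+1)) ℝ)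
              = 1 := by
            rw [MvPolynomial.coeff_add, MvPolynomial.coeff_X_pow]
            rw [if_pos rfl]
            have : coeff (Finsupp.single (0 : Fin (m+1)) 2)
                (1 : MvPolynomial (Fin (m+1)) ℝ) = 0 := by
              rw [MvPolynomial.coeff_one]
              rw [if_neg]
              intro hcon
              have := congrFun (congrArg (fun (f : (Fin (m+1)) →₀ ℕ) => (f : Fin (m+1) → ℕ))
                hcon) 0
              simp at this
            rw [this, add_zero]
          have hmem : Finsupp.single (0 : Fin (m+1)) 2
              ∈ (X 0 ^ 2 + 1 : MvPolynomial (Fin (m+1)) ℝ).support :=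
            MvPolynomial.mem_support_iff.2 (by rw [h1]; norm_num)
          have := (MvPolynomial.totalDegree_eq_zero_iff (Fin (m+1)) _).1 h0 _ hmem 0
          simp at this
        obtain ⟨_, ⟨y, hy⟩⟩ := hsign (X 0 ^ 2 + 1) 0 (by rw [mul_zero]) htd
        have : eval y (X 0 ^ 2 + 1 : MvPolynomial (Fin (m+1)) ℝ) = (y 0)^2 + 1 := by simp
        rw [this] at hy
        nlinarith [sq_nonneg (y 0)]
      · -- main case
        have hexp : ((m+1:ℕ):ℝ) - 1 = (m:ℝ) := by push_cast; ring
        rw [hexp] at hH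
        have hsq : Squarefree Q := by
          intro d hd
          by_contra hdu
          obtain ⟨e, he⟩ := hd
          have htd : (d*d).totalDegree ≠ 0 := by
            intro h0
            set c := coeff 0 (d*d) with hcdef
            have hC : d * d = C c := mv_td0 _ h0
            have hcne : c ≠ 0 := by
              intro h
              rw [h, map_zero] at hC
              rw [hC] at he
              simp only [zero_mul] at he
              exact hQ0 he
            apply hdu
            apply IsUnit.of_mul_eq_one (d * C c⁻¹)
            rw [← mul_assoc, hC, ← C_mul, mul_inv_cancel₀ hcne, C_1]
          obtain ⟨_, ⟨y, hy⟩⟩ := hsign (d*d) e he htd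
          rw [map_mul] at hy
          exact absurd hy (not_lt.2 (mul_self_nonneg _))
        have hpd : ∀ p : MvPolynomial (Fin (m+1)) ℝ, Prime p → p ∣ Q → p ∣ P := by
          intro p hp hpQ
          obtain ⟨e, he⟩ := hpQ
          have htd : p.totalDegree ≠ 0 := by
            intro h0
            have hC : p = C (coeff 0 p) := mv_td0 _ h0
            rcases eq_or_ne (coeff 0 p) 0 with h | h
            · rw [h, map_zero] at hC
              exact hp.ne_zero hC
            · apply hp.not_unit
              revert hC h
              generalize coeff 0 p = c
              intro hC h
              apply IsUnit.of_mul_eq_one (C c⁻¹)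
              rw [hC, ← C_mul, mul_inv_cancel₀ h, C_1]
          obtain ⟨⟨x, hx⟩, ⟨y, hy⟩⟩ := hsign p e he htd
          exact key P Q p hp.irreducible ⟨e, he⟩ hH hx hy
        obtain ⟨R, hR⟩ := sqf_dvd Q P hsq hpd
        exact ⟨R, hR⟩
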